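/- For all signs ε, ε' ∈ {+1,−1} and every integer k with 0 ≤ k ≤ 2r the following identity holds in Cl ⊗ Cl: (2r−k)!·p_{εε'}·I_k = εε'·(−1)^r·k!·p_{εε'}·I_{2r−k}. -/

import Mathlib

open scoped TensorProduct

noncomputable section

/-- The quadratic form `x₁² + ⋯ + x_{2r}²` on `ℂ^{2r}`. -/
def Qf (r : ℕ) : QuadraticForm ℂ (Fin (2*r) → ℂ) :=
  QuadraticMap.weightedSumSquares ℂ (fun _ : Fin (2*r) => (1:ℂ))

/-- The Clifford algebra of `Qf r`. -/
abbrev Cl (r : ℕ) := CliffordAlgebra (Qf r)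

/-- The generators `Γ_i`. -/
def Γgen (r : ℕ) (i : Fin (2*r)) : Cl r :=
  CliffordAlgebra.ι (Qf r) (Pi.single i 1)

/-- The antisymmetrised products `Γ_{[i₁…i_k]}`. -/
def Γbr (r k : ℕ) (i : Fin k → Fin (2*r)) : Cl r :=
  ((k.factorial : ℂ))⁻¹ •
    ∑ σ : Equiv.Perm (Fin k),
      ((Equiv.Perm.sign σ : ℤ) : ℂ) • (List.ofFn fun j => Γgen r (i (σ j))).prod

/-- The invariants `I_k ∈ Cl ⊗ Cl`. -/
def Ik (r k : ℕ) : Cl r ⊗[ℂ] Cl r :=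
  ∑ i : Fin k → Fin (2*r), (Γbr r k i) ⊗ₜ[ℂ] (Γbr r k i)

/-- The split Casimir element `Ĉ = −I₂/(16(2r−2))`. -/
def sC (r : ℕ) : Cl r ⊗[ℂ] Cl r := (-(16*(2*(r:ℂ)-2))⁻¹) • Ik r 2

/-- The top element `Γ_{2r+1} = (−i)^r Γ₁⋯Γ_{2r}`. -/
def Γtop (r : ℕ) : Cl r :=
  ((-Complex.I)^r) • (List.ofFn fun i : Fin (2*r) => Γgen r i).prod

/-- The chirality projector `p_ε = (1 + ε Γ_{2r+1})/2`. -/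
def pCh (r : ℕ) (ε : ℂ) : Cl r := (2:ℂ)⁻¹ • (1 + ε • Γtop r)

/-- The chirality projectors `p_{εε'} = p_ε ⊗ p_{ε'}`. -/
def ppCh (r : ℕ) (ε ε' : ℂ) : Cl r ⊗[ℂ] Cl r := (pCh r ε) ⊗ₜ[ℂ] (pCh r ε')

/-- The eigenvalues `c_k = (2k(2r−k) − r(2r−1))/(16(r−1))`. -/
def cEv (r k : ℕ) : ℂ :=
  (2*(k:ℂ)*(2*(r:ℂ)-(k:ℂ)) - (r:ℂ)*(2*(r:ℂ)-1)) / (16*((r:ℂ)-1))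

/-- The spectral projectors `P_k = Π_{j≠k} (Ĉ − c_j)/(c_k − c_j)`. -/
def Pk (r k : ℕ) : Cl r ⊗[ℂ] Cl r :=
  (((List.range (r+1)).filter (fun j => j ≠ k)).map
    (fun j => (cEv r k - cEv r j)⁻¹ • (sC r - cEv r j • 1))).prod

/-- `P_r^S = (p_{++} + p_{−−})·P_r`. -/
def PrS (r : ℕ) : Cl r ⊗[ℂ] Cl r := (ppCh r 1 1 + ppCh r (-1) (-1)) * Pk r r

/-- The ascending factorial `a_k(u) = (u/2)(u/2+1)⋯(u/2+k−1)`. -/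
def asc (u : ℂ) (k : ℕ) : ℂ := ∏ j ∈ Finset.range k, (u/2 + (j:ℂ))

/- ======================= auxiliary development ======================= -/

section AuxAnticomm
variable {A : Type*} [Ring A]

/-- pairwise anticommuting family -/
def AC {k : ℕ} (f : Fin k → A) : Prop := ∀ x y, x ≠ y → f x * f y = -(f y * f x)

lemma AC.comp {k m : ℕ} {f : Fin k → A} (hf : AC f) {e : Fin m → Fin k}
    (he : Function.Injective e) : AC (fun j => f (e j)) :=
  fun _ _ hxy => hf _ _ (fun h => hxy (he h))

lemma succ_swap {k : ℕ} (a b t : Fin k) :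
    Equiv.swap a.succ b.succ t.succ = (Equiv.swap a b t).succ := by
  rcases eq_or_ne t a with rfl | ha
  · simp
  · rcases eq_or_ne t b with rfl | hb
    · simp
    · rw [Equiv.swap_apply_of_ne_of_ne ha hb,
        Equiv.swap_apply_of_ne_of_ne (fun h => ha (Fin.succ_injective _ h))
          (fun h => hb (Fin.succ_injective _ h))]

lemma sw01 {k : ℕ} (f : Fin (k+2) → A) (hf : AC f) :
    (List.ofFn fun j => f (Equiv.swap 0 1 j)).prod = -(List.ofFn f).prod := by
  rw [List.ofFn_succ, List.ofFn_succ, List.ofFn_succ (f := f), List.ofFn_succ (f := fun i => f i.succ)]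
  have h0 : Equiv.swap (0:Fin (k+2)) 1 0 = 1 := by simp
  have h1 : Equiv.swap (0:Fin (k+2)) 1 (Fin.succ 0) = 0 := by simp [Fin.succ_zero_eq_one]
  have h2 : (fun i : Fin k => f (Equiv.swap 0 1 i.succ.succ)) = fun i => f i.succ.succ := by
    funext t
    have hne0 : (t.succ.succ : Fin (k+2)) ≠ 0 := Fin.succ_ne_zero _
    have hne1 : (t.succ.succ : Fin (k+2)) ≠ 1 := by
      rw [← Fin.succ_zero_eq_one]
      exact fun h => Fin.succ_ne_zero _ (Fin.succ_injective _ h)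
    rw [Equiv.swap_apply_of_ne_of_ne hne0 hne1]
  rw [h0, h1, h2, List.prod_cons, List.prod_cons, List.prod_cons, List.prod_cons,
    ← mul_assoc, ← mul_assoc, Fin.succ_zero_eq_one, hf 1 0 (by simp [Fin.ext_iff]), neg_mul]

lemma sw0 : ∀ (k : ℕ) (f : Fin (k+1) → A), AC f → ∀ p : Fin (k+1), p ≠ 0 →
    (List.ofFn fun j => f (Equiv.swap 0 p j)).prod = -(List.ofFn f).prod := by
  intro k
  induction k with
  | zero =>
    intro f _ p hp
    exact absurd (by ext; omega : p = 0) hp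
  | succ k IH =>
    intro f hf p hp
    obtain ⟨q, rfl⟩ : ∃ q : Fin (k+1), p = q.succ := ⟨p.pred hp, by simp⟩
    rcases eq_or_ne q 0 with rfl | hq
    · rw [Fin.succ_zero_eq_one]; exact sw01 f hf
    · have hq1 : (q.succ : Fin (k+2)) ≠ 1 := by
        rw [← Fin.succ_zero_eq_one]
        exact fun h => hq (Fin.succ_injective _ h)
      have h10 : (1 : Fin (k+2)) ≠ 0 := by simp [Fin.ext_iff]
      have hfun : ∀ x, Equiv.swap (0:Fin (k+2)) q.succ x
          = Equiv.swap 0 1 (Equiv.swap 1 q.succ (Equiv.swap 0 1 x)) := by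
        intro x
        rcases eq_or_ne x 0 with rfl | hx0
        · rw [Equiv.swap_apply_left, Equiv.swap_apply_left, Equiv.swap_apply_left,
            Equiv.swap_apply_of_ne_of_ne (Fin.succ_ne_zero q) hq1]
        rcases eq_or_ne x 1 with rfl | hx1
        · rw [Equiv.swap_apply_of_ne_of_ne h10 hq1.symm, Equiv.swap_apply_right,
            Equiv.swap_apply_of_ne_of_ne h10.symm (Fin.succ_ne_zero q).symm, Equiv.swap_apply_left]
        rcases eq_or_ne x q.succ with rfl | hxq
        · rw [Equiv.swap_apply_right, Equiv.swap_apply_of_ne_of_ne (Fin.succ_ne_zero q) hq1,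
            Equiv.swap_apply_right, Equiv.swap_apply_right]
        · rw [Equiv.swap_apply_of_ne_of_ne hx0 hxq, Equiv.swap_apply_of_ne_of_ne hx0 hx1,
            Equiv.swap_apply_of_ne_of_ne hx1 hxq, Equiv.swap_apply_of_ne_of_ne hx0 hx1]
      have hg : AC (fun j => f (Equiv.swap (0:Fin (k+2)) 1 j)) := hf.comp (Equiv.injective _)
      have hgw : AC (fun j => f (Equiv.swap (0:Fin (k+2)) 1 (Equiv.swap 1 q.succ j))) :=
        hg.comp (Equiv.injective _)
      calc (List.ofFn fun j => f (Equiv.swap 0 q.succ j)).prod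
          = (List.ofFn fun j => (fun x => f (Equiv.swap (0:Fin (k+2)) 1 (Equiv.swap 1 q.succ x))) (Equiv.swap 0 1 j)).prod := by
            simp only [hfun]
        _ = -(List.ofFn fun j => f (Equiv.swap (0:Fin (k+2)) 1 (Equiv.swap 1 q.succ j))).prod := sw01 _ hgw
        _ = -(-(List.ofFn fun j => f (Equiv.swap (0:Fin (k+2)) 1 j)).prod) := by
            congr 1
            set g : Fin (k+2) → A := fun j => f (Equiv.swap (0:Fin (k+2)) 1 j) with hgdef
            show (List.ofFn fun j => g (Equiv.swap 1 q.succ j)).prod = -(List.ofFn g).prod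
            rw [List.ofFn_succ, List.ofFn_succ (f := g)]
            have hh0 : Equiv.swap (1:Fin (k+2)) q.succ 0 = 0 :=
              Equiv.swap_apply_of_ne_of_ne h10.symm (Fin.succ_ne_zero _).symm
            have hh : (fun t : Fin (k+1) => g (Equiv.swap 1 q.succ t.succ))
                = fun t => (fun s => g s.succ) (Equiv.swap 0 q t) := by
              funext t
              rw [← Fin.succ_zero_eq_one, succ_swap]
            rw [hh0, hh, List.prod_cons, List.prod_cons,
              IH (fun s => g s.succ) (hg.comp (Fin.succ_injective _)) q hq, mul_neg]
        _ = (List.ofFn fun j => f (Equiv.swap (0:Fin (k+2)) 1 j)).prod := neg_neg _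
        _ = -(List.ofFn f).prod := sw01 f hf

lemma prod_ofFn_perm : ∀ (k : ℕ) (f : Fin k → A), AC f → ∀ σ : Equiv.Perm (Fin k),
    (List.ofFn fun j => f (σ j)).prod = (Equiv.Perm.sign σ : ℤ) • (List.ofFn f).prod := by
  intro k
  induction k with
  | zero =>
    intro f _ σ
    have : σ = 1 := by ext x; exact x.elim0
    subst this; simp
  | succ k IH =>
    intro f hf σ
    obtain ⟨⟨p, e⟩, rfl⟩ : ∃ pe, Equiv.Perm.decomposeFin.symm pe = σ :=
      ⟨Equiv.Perm.decomposeFin σ, Equiv.Perm.decomposeFin.symm_apply_apply σ⟩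
    have hx : ∀ x, (Equiv.Perm.decomposeFin.symm (p, e)) x
        = Equiv.swap 0 p ((Equiv.Perm.decomposeFin.symm (0, e)) x) := by
      intro x
      refine Fin.cases ?_ (fun i => ?_) x
      · simp
      · simp [Equiv.Perm.decomposeFin_symm_apply_succ]
    have step1 : (List.ofFn fun j => f (Equiv.Perm.decomposeFin.symm (p, e) j)).prod
        = (Equiv.Perm.sign e : ℤ) • (List.ofFn fun j => f (Equiv.swap 0 p j)).prod := by
      have hg : AC (fun j => f (Equiv.swap 0 p j)) := hf.comp (Equiv.injective _)
      simp only [hx]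
      rw [List.ofFn_succ]
      have h0 : (Equiv.Perm.decomposeFin.symm ((0 : Fin (k+1)), e)) 0 = 0 := by simp
      have htail : (fun i : Fin k => f (Equiv.swap 0 p ((Equiv.Perm.decomposeFin.symm (0, e)) i.succ)))
          = fun i => (fun s => f (Equiv.swap 0 p s.succ)) (e i) := by
        funext i
        simp [Equiv.Perm.decomposeFin_symm_apply_succ]
      rw [h0, htail, List.prod_cons,
        IH (fun s => f (Equiv.swap 0 p s.succ)) (hg.comp (Fin.succ_injective _)) e,
        List.ofFn_succ (f := fun j => f (Equiv.swap 0 p j)), List.prod_cons]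
      rw [mul_smul_comm]
    rw [step1]
    rcases eq_or_ne p 0 with rfl | hp
    · have : (fun j => f (Equiv.swap (0:Fin (k+1)) 0 j)) = f := by
        funext j; rw [Equiv.swap_self]; rfl
      rw [this, Equiv.Perm.decomposeFin.symm_sign, if_pos rfl, one_mul]
    · rw [sw0 k f hf p hp, Equiv.Perm.decomposeFin.symm_sign, if_neg hp, zsmul_neg,
        ← neg_zsmul]
      norm_num

lemma Rsymm : Symmetric (fun a b : A => a * b = -(b * a)) := by
  intro a b h
  rw [h, neg_neg]

lemma perm_pm {l₁ l₂ : List A} (h : l₁.Perm l₂)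
    (hp : l₁.Pairwise (fun a b => a * b = -(b * a))) :
    ∃ c : ℤ, (c = 1 ∨ c = -1) ∧ l₁.prod = c • l₂.prod := by
  induction h with
  | nil => exact ⟨1, Or.inl rfl, by simp⟩
  | cons x h ih =>
    obtain ⟨c, hc, he⟩ := ih (List.pairwise_cons.mp hp).2
    exact ⟨c, hc, by rw [List.prod_cons, List.prod_cons, he, mul_smul_comm]⟩
  | swap x y l =>
    refine ⟨-1, Or.inr rfl, ?_⟩
    have hxy : y * x = -(x * y) := (List.pairwise_cons.mp hp).1 x List.mem_cons_self
    rw [List.prod_cons, List.prod_cons, List.prod_cons, List.prod_cons, ← mul_assoc, ← mul_assoc,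
      hxy]
    simp
  | trans h₁ h₂ ih₁ ih₂ =>
    obtain ⟨c₁, hc₁, he₁⟩ := ih₁ hp
    obtain ⟨c₂, hc₂, he₂⟩ := ih₂ ((h₁.pairwise_iff (fun h => Rsymm h)).mp hp)
    refine ⟨c₁ * c₂, ?_, by rw [he₁, he₂, smul_smul]⟩
    rcases hc₁ with rfl | rfl <;> rcases hc₂ with rfl | rfl <;> simp

lemma move_through (a : A) (l : List A) (hl : ∀ b ∈ l, a * b = -(b * a)) :
    a * l.prod = ((-1)^l.length : ℤ) • (l.prod * a) := by
  induction l with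
  | nil => simp
  | cons b t ih =>
    have hb : a * b = -(b * a) := hl b List.mem_cons_self
    have iht := ih (fun x hx => hl x (List.mem_cons_of_mem _ hx))
    rw [List.prod_cons, List.length_cons, ← mul_assoc, hb, neg_mul, mul_assoc, iht,
      pow_succ, mul_smul_comm, ← neg_smul, mul_neg_one, mul_assoc]

lemma prod_sq (l : List A) (hsq : ∀ a ∈ l, a * a = 1)
    (hac : l.Pairwise (fun a b => a * b = -(b * a))) :
    l.prod * l.prod = ((-1)^(l.length.choose 2) : ℤ) • 1 := by
  induction l with
  | nil => simp
  | cons a t ih =>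
    obtain ⟨h1, h2⟩ := List.pairwise_cons.mp hac
    have iht := ih (fun x hx => hsq x (List.mem_cons_of_mem _ hx)) h2
    have hmv : a * t.prod = ((-1)^t.length : ℤ) • (t.prod * a) := move_through a t h1
    have haa : a * a = 1 := hsq a List.mem_cons_self
    have hmv' : t.prod * a = ((-1)^t.length : ℤ) • (a * t.prod) := by
      rw [hmv, smul_smul, ← pow_add, ← two_mul, pow_mul]
      norm_num
    have key : (a * t.prod) * (a * t.prod) = ((-1)^t.length : ℤ) • (t.prod * t.prod) := by
      calc (a * t.prod) * (a * t.prod) = a * ((t.prod * a) * t.prod) := by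
            rw [mul_assoc, ← mul_assoc t.prod]
        _ = a * ((((-1)^t.length : ℤ) • (a * t.prod)) * t.prod) := by rw [hmv']
        _ = ((-1)^t.length : ℤ) • ((a * a) * (t.prod * t.prod)) := by
            rw [smul_mul_assoc, mul_smul_comm, ← mul_assoc, ← mul_assoc, mul_assoc (a*a)]
        _ = ((-1)^t.length : ℤ) • (t.prod * t.prod) := by rw [haa, one_mul]
    rw [List.prod_cons, key, iht, smul_smul, List.length_cons]
    congr 1
    rw [Nat.choose_succ_succ, Nat.choose_one_right, pow_add]
end AuxAnticomm

section AuxClifford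
variable {r : ℕ}

lemma Qf_single (r : ℕ) (i : Fin (2*r)) : Qf r (Pi.single i 1) = 1 := by
  simp [Qf, QuadraticMap.weightedSumSquares_apply, Pi.single_apply]

lemma gsq (r : ℕ) (i : Fin (2*r)) : Γgen r i * Γgen r i = 1 := by
  rw [Γgen, CliffordAlgebra.ι_sq_scalar, Qf_single, map_one]

lemma ganti (r : ℕ) {i j : Fin (2*r)} (h : i ≠ j) :
    Γgen r i * Γgen r j = -(Γgen r j * Γgen r i) := by
  have H := CliffordAlgebra.ι_mul_ι_add_swap (Q := Qf r) (Pi.single i 1) (Pi.single j 1)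
  set v : Fin (2*r) → ℂ := Pi.single i 1 + Pi.single j 1 with hv
  have hq : Qf r v = 2 := by
    rw [Qf, QuadraticMap.weightedSumSquares_apply]
    have key : ∀ l : Fin (2*r), (1:ℂ) • (v l * v l)
        = (if l = i then 1 else 0) + (if l = j then 1 else 0) := by
      intro l
      have hvl : v l = (if l = i then 1 else 0) + (if l = j then 1 else 0) := by
        simp [hv, Pi.single_apply, eq_comm]
      rw [smul_eq_mul, one_mul, hvl]
      by_cases hi : l = i <;> by_cases hj : l = j <;> simp_all <;> ring
    rw [Finset.sum_congr rfl fun l _ => key l, Finset.sum_add_distrib]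
    norm_num [Finset.sum_ite_eq']
  have h0 : Γgen r i * Γgen r j + Γgen r j * Γgen r i = 0 := by
    rw [Γgen, Γgen, H]
    rw [show QuadraticMap.polar (⇑(Qf r)) (Pi.single i 1) (Pi.single j 1)
        = Qf r v - Qf r (Pi.single i 1) - Qf r (Pi.single j 1) from rfl,
      hq, Qf_single, Qf_single]
    norm_num
  rw [eq_neg_iff_add_eq_zero]; exact h0

lemma AC_g (r : ℕ) {k : ℕ} {i : Fin k → Fin (2*r)} (hi : Function.Injective i) :
    AC (fun j => Γgen r (i j)) := fun _ _ hxy => ganti r (fun h => hxy (hi h))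

lemma Γbr_inj (r : ℕ) {k : ℕ} {i : Fin k → Fin (2*r)} (hi : Function.Injective i) :
    Γbr r k i = (List.ofFn fun j => Γgen r (i j)).prod := by
  rw [Γbr]
  have hterm : ∀ σ : Equiv.Perm (Fin k),
      ((Equiv.Perm.sign σ : ℤ) : ℂ) • (List.ofFn fun j => Γgen r (i (σ j))).prod
        = (List.ofFn fun j => Γgen r (i j)).prod := by
    intro σ
    rw [show (List.ofFn fun j => Γgen r (i (σ j))) = List.ofFn fun j => (fun s => Γgen r (i s)) (σ j) from rfl,
      prod_ofFn_perm k _ (AC_g r hi) σ, ← Int.cast_smul_eq_zsmul ℂ, smul_smul, ← Int.cast_mul]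
    rcases Int.units_eq_one_or (Equiv.Perm.sign σ) with h | h <;> rw [h] <;> norm_num
  rw [Finset.sum_congr rfl (fun σ _ => hterm σ), Finset.sum_const, Finset.card_univ,
    Fintype.card_perm, Fintype.card_fin, ← Nat.cast_smul_eq_nsmul ℂ, smul_smul,
    inv_mul_cancel₀ (by exact_mod_cast (Nat.factorial_ne_zero k)), one_smul]

lemma Γbr_zero (r : ℕ) {k : ℕ} {i : Fin k → Fin (2*r)} (hi : ¬ Function.Injective i) :
    Γbr r k i = 0 := by
  obtain ⟨a, b, hab, hne⟩ := Function.not_injective_iff.mp hi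
  rw [Γbr]
  set S := ∑ σ : Equiv.Perm (Fin k),
      ((Equiv.Perm.sign σ : ℤ) : ℂ) • (List.ofFn fun j => Γgen r (i (σ j))).prod with hS
  have hrei : S = ∑ σ : Equiv.Perm (Fin k),
      ((Equiv.Perm.sign (Equiv.swap a b * σ) : ℤ) : ℂ) •
        (List.ofFn fun j => Γgen r (i ((Equiv.swap a b * σ) j))).prod := by
    rw [hS]
    exact Fintype.sum_equiv (Equiv.mulLeft (Equiv.swap a b)) _ _ (fun σ => rfl) |>.symm
  have hneg : S = -S := by
    nth_rewrite 1 [hrei]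
    rw [← Finset.sum_neg_distrib]
    refine Finset.sum_congr rfl (fun σ _ => ?_)
    have hsw : ∀ x, i (Equiv.swap a b x) = i x := by
      intro x
      rcases eq_or_ne x a with rfl | hxa
      · rw [Equiv.swap_apply_left]; exact hab.symm
      rcases eq_or_ne x b with rfl | hxb
      · rw [Equiv.swap_apply_right]; exact hab
      · rw [Equiv.swap_apply_of_ne_of_ne hxa hxb]
    have hlist : (List.ofFn fun j => Γgen r (i ((Equiv.swap a b * σ) j)))
        = List.ofFn fun j => Γgen r (i (σ j)) := by
      simp only [Equiv.Perm.mul_apply, hsw]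
    rw [hlist, Equiv.Perm.sign_mul, Equiv.Perm.sign_swap hne, ← neg_smul]
    norm_num
  have h2 : (2:ℂ) • S = 0 := by
    rw [two_smul]; nth_rewrite 2 [hneg]; rw [add_neg_cancel]
  have hS0 : S = 0 := by
    rcases smul_eq_zero.mp h2 with h | h
    · norm_num at h
    · exact h
  rw [hS0, smul_zero]
end AuxClifford

section AuxMain
variable {r : ℕ}

/-- order-preserving enumeration of a `k`-element subset -/
def ES {k : ℕ} (S : Finset (Fin (2*r))) (hS : S.card = k) : Fin k → Fin (2*r) :=
  fun j => ((S.orderIsoOfFin hS j : Fin (2*r)))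

lemma ES_injective {k : ℕ} (S : Finset (Fin (2*r))) (hS : S.card = k) :
    Function.Injective (ES S hS) :=
  fun _ _ h => (S.orderIsoOfFin hS).injective (Subtype.ext h)

lemma ES_mem {k : ℕ} (S : Finset (Fin (2*r))) (hS : S.card = k) (j : Fin k) :
    ES S hS j ∈ S := (S.orderIsoOfFin hS j).2

lemma ES_surj {k : ℕ} (S : Finset (Fin (2*r))) (hS : S.card = k) {x : Fin (2*r)}
    (hx : x ∈ S) : ∃ j, ES S hS j = x :=
  ⟨(S.orderIsoOfFin hS).symm ⟨x, hx⟩, by simp [ES]⟩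

/-- the ordered product of generators over a subset -/
def Γo {k : ℕ} (r : ℕ) (S : Finset (Fin (2*r))) (hS : S.card = k) : Cl r :=
  (List.ofFn fun j => Γgen r (ES S hS j)).prod

def Jk (r k : ℕ) : Cl r ⊗[ℂ] Cl r :=
  ∑ S : {S : Finset (Fin (2*r)) // S.card = k}, (Γo r S.1 S.2) ⊗ₜ[ℂ] (Γo r S.1 S.2)

def ofPair (r k : ℕ) (p : {S : Finset (Fin (2*r)) // S.card = k} × Equiv.Perm (Fin k)) :
    Fin k → Fin (2*r) := fun j => ES p.1.1 p.1.2 (p.2 j)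

lemma ofPair_injective {k : ℕ} (p : {S : Finset (Fin (2*r)) // S.card = k} × Equiv.Perm (Fin k)) :
    Function.Injective (ofPair r k p) :=
  fun _ _ h => p.2.injective (ES_injective _ _ h)

lemma image_ofPair {k : ℕ} (p : {S : Finset (Fin (2*r)) // S.card = k} × Equiv.Perm (Fin k)) :
    Finset.image (ofPair r k p) Finset.univ = p.1.1 := by
  ext x
  simp only [Finset.mem_image, Finset.mem_univ, true_and]
  constructor
  · rintro ⟨j, rfl⟩; exact ES_mem _ _ _
  · intro hx
    obtain ⟨j, hj⟩ := ES_surj p.1.1 p.1.2 hx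
    exact ⟨p.2.symm j, by simp [ofPair, hj]⟩

lemma Ik_eq_Jk (r k : ℕ) : Ik r k = (k.factorial : ℂ) • Jk r k := by
  rw [Ik]
  rw [← Finset.sum_filter_add_sum_filter_not Finset.univ (fun i => Function.Injective i)]
  have hzero : ∑ i ∈ Finset.univ.filter (fun i : Fin k → Fin (2*r) => ¬ Function.Injective i),
      (Γbr r k i) ⊗ₜ[ℂ] (Γbr r k i) = 0 := by
    refine Finset.sum_eq_zero (fun i hi => ?_)
    rw [Γbr_zero r (Finset.mem_filter.mp hi).2, TensorProduct.zero_tmul]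
  rw [hzero, add_zero]
  have hbij : ∑ i ∈ Finset.univ.filter (fun i : Fin k → Fin (2*r) => Function.Injective i),
      (Γbr r k i) ⊗ₜ[ℂ] (Γbr r k i)
      = ∑ p : {S : Finset (Fin (2*r)) // S.card = k} × Equiv.Perm (Fin k),
          (Γo r p.1.1 p.1.2) ⊗ₜ[ℂ] (Γo r p.1.1 p.1.2) := by
    symm
    refine Finset.sum_bij (fun p _ => ofPair r k p) ?_ ?_ ?_ ?_
    · intro p _
      simp only [Finset.mem_filter, Finset.mem_univ, true_and]
      exact ofPair_injective p
    · intro p _ q _ h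
      have h' : ofPair r k p = ofPair r k q := h
      have hS : p.1 = q.1 := Subtype.ext (by rw [← image_ofPair p, ← image_ofPair q, h'])
      obtain ⟨⟨S, hS1⟩, σ⟩ := p
      obtain ⟨⟨T, hT1⟩, τ⟩ := q
      have hST : S = T := by simpa using hS
      subst hST
      have hσ : σ = τ := by
        ext j
        have hj : σ j = τ j := ES_injective S hS1 (congrFun h' j)
        exact congrArg Fin.val hj
      simp only [Prod.mk.injEq, Subtype.mk.injEq]
      exact ⟨trivial, hσ⟩
    · intro i hi
      have hinj : Function.Injective i := (Finset.mem_filter.mp hi).2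
      have hcard : (Finset.image i Finset.univ).card = k := by
        rw [Finset.card_image_of_injective _ hinj, Finset.card_univ, Fintype.card_fin]
      set S : Finset (Fin (2*r)) := Finset.image i Finset.univ with hSdef
      have hmem : ∀ j, i j ∈ S := fun j => Finset.mem_image_of_mem i (Finset.mem_univ j)
      set u : Fin k → Fin k := fun j => (S.orderIsoOfFin hcard).symm ⟨i j, hmem j⟩ with hu
      have huinj : Function.Injective u := by
        intro a b h
        apply hinj
        have := (S.orderIsoOfFin hcard).symm.injective h
        simpa using congrArg Subtype.val this
      have hubij : Function.Bijective u := Finite.injective_iff_bijective.mp huinj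
      refine ⟨(⟨S, hcard⟩, Equiv.ofBijective u hubij), Finset.mem_univ _, ?_⟩
      funext j
      simp only [ofPair, ES, Equiv.ofBijective_apply, hu]
      simp
    · intro p _
      have hinj : Function.Injective (ofPair r k p) := ofPair_injective p
      rw [Γbr_inj r hinj]
      have hps : (List.ofFn fun j => Γgen r (ofPair r k p j)).prod
          = ((Equiv.Perm.sign p.2 : ℤ)) • (List.ofFn fun j => Γgen r (ES p.1.1 p.1.2 j)).prod := by
        rw [show (List.ofFn fun j => Γgen r (ofPair r k p j))
            = List.ofFn fun j => (fun s => Γgen r (ES p.1.1 p.1.2 s)) (p.2 j) from rfl]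
        exact prod_ofFn_perm k _ (AC_g r (ES_injective _ _)) p.2
      rw [hps, Γo]
      rcases Int.units_eq_one_or (Equiv.Perm.sign p.2) with h | h <;> rw [h] <;>
        simp [TensorProduct.smul_tmul, TensorProduct.tmul_smul, TensorProduct.neg_tmul,
          TensorProduct.tmul_neg]
  rw [hbij, Fintype.sum_prod_type, Jk, Finset.smul_sum]
  refine Finset.sum_congr rfl (fun S _ => ?_)
  calc (∑ y : Equiv.Perm (Fin k), Γo r (S, y).1.1 (S, y).1.2 ⊗ₜ[ℂ] Γo r (S, y).1.1 (S, y).1.2)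
      = ∑ _y : Equiv.Perm (Fin k), Γo r S.1 S.2 ⊗ₜ[ℂ] Γo r S.1 S.2 :=
        Finset.sum_congr rfl (fun y _ => rfl)
    _ = (k.factorial : ℂ) • Γo r S.1 S.2 ⊗ₜ[ℂ] Γo r S.1 S.2 := by
        rw [Finset.sum_const, Finset.card_univ, Fintype.card_perm, Fintype.card_fin,
          ← Nat.cast_smul_eq_nsmul ℂ]

lemma pairwise_map_g (l : List (Fin (2*r))) (hl : l.Nodup) :
    (l.map (Γgen r)).Pairwise (fun a b : Cl r => a * b = -(b * a)) :=
  List.Pairwise.map _ (fun {a b} hab => ganti r hab) hl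

lemma sq_map_g (l : List (Fin (2*r))) : ∀ a ∈ l.map (Γgen r), a * a = 1 := by
  intro a ha
  obtain ⟨x, _, rfl⟩ := List.mem_map.mp ha
  exact gsq r x

lemma nodup_ofFn_ES {k : ℕ} (S : Finset (Fin (2*r))) (hS : S.card = k) :
    (List.ofFn (ES S hS)).Nodup := List.nodup_ofFn.mpr (ES_injective S hS)

lemma mem_ofFn_ES {k : ℕ} (S : Finset (Fin (2*r))) (hS : S.card = k) (x : Fin (2*r)) :
    x ∈ List.ofFn (ES S hS) ↔ x ∈ S := by
  rw [List.mem_ofFn]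
  constructor
  · rintro ⟨j, rfl⟩; exact ES_mem S hS j
  · intro hx; exact ES_surj S hS hx

lemma Γo_eq_map {k : ℕ} (S : Finset (Fin (2*r))) (hS : S.card = k) :
    Γo r S hS = ((List.ofFn (ES S hS)).map (Γgen r)).prod := by
  rw [Γo, List.map_ofFn]
  rfl

lemma Γo_sq {k : ℕ} (S : Finset (Fin (2*r))) (hS : S.card = k) :
    ∃ c : ℤ, (c = 1 ∨ c = -1) ∧ Γo r S hS * Γo r S hS = (c : ℂ) • 1 := by
  refine ⟨(-1)^(k.choose 2), ?_, ?_⟩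
  · rcases Nat.even_or_odd (k.choose 2) with h | h
    · exact Or.inl h.neg_one_pow
    · exact Or.inr h.neg_one_pow
  · rw [Γo_eq_map]
    have hps := prod_sq ((List.ofFn (ES S hS)).map (Γgen r)) (sq_map_g _)
      (pairwise_map_g _ (nodup_ofFn_ES S hS))
    rw [List.length_map, List.length_ofFn] at hps
    rw [hps, ← Int.cast_smul_eq_zsmul ℂ]

lemma perm_full {k : ℕ} (S : Finset (Fin (2*r))) (hS : S.card = k)
    (hS' : Sᶜ.card = 2*r - k) :
    (List.ofFn (fun j : Fin (2*r) => j)).Perm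
      (List.ofFn (ES Sᶜ hS') ++ List.ofFn (ES S hS)) := by
  apply List.perm_of_nodup_nodup_toFinset_eq
  · exact List.nodup_ofFn.mpr (fun a b h => h)
  · refine List.Nodup.append (nodup_ofFn_ES _ _) (nodup_ofFn_ES _ _) ?_
    intro a ha hb
    rw [mem_ofFn_ES] at ha hb
    exact (Finset.mem_compl.mp ha) hb
  · ext a
    simp only [List.mem_toFinset, List.mem_append, List.mem_ofFn]
    constructor
    · intro _
      by_cases h : a ∈ S
      · obtain ⟨j, hj⟩ := ES_surj S hS h
        exact Or.inr ⟨j, hj⟩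
      · obtain ⟨j, hj⟩ := ES_surj Sᶜ hS' (Finset.mem_compl.mpr h)
        exact Or.inl ⟨j, hj⟩
    · intro _
      exact Set.mem_range.mpr ⟨a, rfl⟩

lemma Γtop_mul_Γo {k : ℕ} (S : Finset (Fin (2*r))) (hS : S.card = k)
    (hS' : Sᶜ.card = 2*r - k) :
    ∃ d : ℂ, d * d = (-1:ℂ)^r ∧ Γtop r * Γo r S hS = d • Γo r Sᶜ hS' := by
  obtain ⟨c₁, hc₁, he₁⟩ := perm_pm ((perm_full S hS hS').map (Γgen r))
    (pairwise_map_g _ (List.nodup_ofFn.mpr (fun a b h => h)))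
  obtain ⟨c₂, hc₂, he₂⟩ := Γo_sq S hS
  have hfull : (List.ofFn fun i : Fin (2*r) => Γgen r i).prod
      = ((List.ofFn (fun j : Fin (2*r) => j)).map (Γgen r)).prod := by
    rw [List.map_ofFn]; rfl
  refine ⟨(-Complex.I)^r * ((c₁ : ℂ) * (c₂ : ℂ)), ?_, ?_⟩
  · have h1 : ((c₁:ℂ) * c₂) * ((c₁:ℂ) * c₂) = 1 := by
      rcases hc₁ with rfl | rfl <;> rcases hc₂ with rfl | rfl <;> norm_num
    have h2 : (-Complex.I)^r * (-Complex.I)^r = (-1:ℂ)^r := by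
      rw [← mul_pow, neg_mul_neg, Complex.I_mul_I]
    calc (-Complex.I)^r * ((c₁:ℂ) * c₂) * ((-Complex.I)^r * ((c₁:ℂ) * c₂))
        = ((-Complex.I)^r * (-Complex.I)^r) * (((c₁:ℂ)*c₂) * ((c₁:ℂ)*c₂)) := by ring
      _ = (-1:ℂ)^r := by rw [h1, h2, mul_one]
  · rw [Γtop, hfull, smul_mul_assoc, he₁, List.map_append, List.prod_append, ← Γo_eq_map, ← Γo_eq_map]
    rw [smul_mul_assoc, mul_assoc, he₂, mul_smul_comm, mul_one,
      ← Int.cast_smul_eq_zsmul ℂ c₁, smul_smul, smul_smul, mul_assoc]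

lemma card_compl_eq {k : ℕ} (S : Finset (Fin (2*r))) (hS : S.card = k) :
    Sᶜ.card = 2*r - k := by
  rw [Finset.card_compl, hS, Fintype.card_fin]

lemma Γtop_sq (hr : 1 ≤ r) : Γtop r * Γtop r = 1 := by
  have hfull : (List.ofFn fun i : Fin (2*r) => Γgen r i)
      = (List.ofFn (fun j : Fin (2*r) => j)).map (Γgen r) := by
    rw [List.map_ofFn]; rfl
  have hP := prod_sq ((List.ofFn (fun j : Fin (2*r) => j)).map (Γgen r))
    (sq_map_g _) (pairwise_map_g _ (List.nodup_ofFn.mpr (fun a b h => h)))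
  rw [List.length_map, List.length_ofFn] at hP
  have hch : (2*r).choose 2 = r * (2*r - 1) := by
    rw [Nat.choose_two_right]
    rw [show 2*r*(2*r-1) = 2*(r*(2*r-1)) from by ring]
    exact Nat.mul_div_cancel_left _ (by norm_num)
  rw [Γtop, hfull, smul_mul_assoc, mul_smul_comm, hP, smul_smul,
    ← Int.cast_smul_eq_zsmul ℂ, smul_smul, hch]
  have h2 : (-Complex.I)^r * (-Complex.I)^r = (-1:ℂ)^r := by
    rw [← mul_pow, neg_mul_neg, Complex.I_mul_I]
  rw [h2]
  obtain ⟨m, rfl⟩ : ∃ m, r = m + 1 := ⟨r - 1, by omega⟩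
  rw [show 2*(m+1) - 1 = 2*m+1 from by omega]
  push_cast
  rw [← pow_add, show (m+1) + (m+1)*(2*m+1) = 2*((m+1)*(m+1)) from by ring, pow_mul]
  norm_num

def complEquiv (r k : ℕ) (hk : k ≤ 2*r) :
    {S : Finset (Fin (2*r)) // S.card = k} ≃ {T : Finset (Fin (2*r)) // T.card = 2*r - k} where
  toFun S := ⟨S.1ᶜ, card_compl_eq S.1 S.2⟩
  invFun T := ⟨T.1ᶜ, by rw [Finset.card_compl, T.2, Fintype.card_fin]; omega⟩
  left_inv S := Subtype.ext (compl_compl _)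
  right_inv T := Subtype.ext (compl_compl _)

lemma dual (k : ℕ) (hk : k ≤ 2*r) :
    (Γtop r ⊗ₜ[ℂ] Γtop r) * Jk r k = ((-1:ℂ)^r) • Jk r (2*r - k) := by
  rw [Jk, Finset.mul_sum]
  have per : ∀ S : {S : Finset (Fin (2*r)) // S.card = k},
      (Γtop r ⊗ₜ[ℂ] Γtop r) * (Γo r S.1 S.2 ⊗ₜ[ℂ] Γo r S.1 S.2)
        = ((-1:ℂ)^r) • ((Γo r S.1ᶜ (card_compl_eq S.1 S.2)) ⊗ₜ[ℂ] (Γo r S.1ᶜ (card_compl_eq S.1 S.2))) := by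
    intro S
    obtain ⟨d, hd, hmul⟩ := Γtop_mul_Γo S.1 S.2 (card_compl_eq S.1 S.2)
    rw [Algebra.TensorProduct.tmul_mul_tmul, hmul, TensorProduct.smul_tmul_smul, hd]
  rw [Finset.sum_congr rfl (fun S _ => per S), ← Finset.smul_sum]
  congr 1
  rw [Jk]
  exact Fintype.sum_equiv (complEquiv r k hk) _ _ (fun S => rfl)

lemma eps_sq {ε : ℂ} (hε : ε = 1 ∨ ε = -1) : ε * ε = 1 := by
  rcases hε with rfl | rfl <;> norm_num

lemma pCh_mul_Γtop (hr : 1 ≤ r) {ε : ℂ} (hε : ε = 1 ∨ ε = -1) :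
    pCh r ε * Γtop r = ε • pCh r ε := by
  rcases hε with rfl | rfl <;>
    simp [pCh, smul_mul_assoc, add_mul, one_mul, smul_add, smul_smul, Γtop_sq hr, add_comm]

lemma ppCh_mul_ΓΓ (hr : 1 ≤ r) {ε ε' : ℂ} (hε : ε = 1 ∨ ε = -1) (hε' : ε' = 1 ∨ ε' = -1) :
    ppCh r ε ε' * (Γtop r ⊗ₜ[ℂ] Γtop r) = (ε * ε') • ppCh r ε ε' := by
  rw [ppCh, Algebra.TensorProduct.tmul_mul_tmul, pCh_mul_Γtop hr hε, pCh_mul_Γtop hr hε',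
    TensorProduct.smul_tmul_smul]
end AuxMain

/-- `(2r−k)!·p_{εε'}·I_k = εε'·(−1)^r·k!·p_{εε'}·I_{2r−k}`. -/
theorem ppCh_mul_Ik (r : ℕ) (hr : 2 ≤ r) (ε ε' : ℂ)
    (hε : ε = 1 ∨ ε = -1) (hε' : ε' = 1 ∨ ε' = -1) (k : ℕ) (hk : k ≤ 2*r) :
    (((2*r - k).factorial : ℂ)) • (ppCh r ε ε' * Ik r k)
      = (ε * ε' * (-1:ℂ)^r * (k.factorial : ℂ)) • (ppCh r ε ε' * Ik r (2*r - k)) := by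
  have hr1 : 1 ≤ r := le_trans one_le_two hr
  have hee : (ε * ε') * (ε * ε') = 1 := by
    rcases hε with rfl | rfl <;> rcases hε' with rfl | rfl <;> norm_num
  have key : ppCh r ε ε' * Jk r k = ((ε * ε') * (-1:ℂ)^r) • (ppCh r ε ε' * Jk r (2*r - k)) := by
    have hA : (ε*ε') • (ppCh r ε ε' * Jk r k) = (-1:ℂ)^r • (ppCh r ε ε' * Jk r (2*r-k)) := by
      calc (ε*ε') • (ppCh r ε ε' * Jk r k)
          = ((ε*ε') • ppCh r ε ε') * Jk r k := by rw [smul_mul_assoc]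
        _ = (ppCh r ε ε' * (Γtop r ⊗ₜ[ℂ] Γtop r)) * Jk r k := by rw [ppCh_mul_ΓΓ hr1 hε hε']
        _ = ppCh r ε ε' * ((Γtop r ⊗ₜ[ℂ] Γtop r) * Jk r k) := by rw [mul_assoc]
        _ = ppCh r ε ε' * (((-1:ℂ)^r) • Jk r (2*r-k)) := by rw [dual k hk]
        _ = (-1:ℂ)^r • (ppCh r ε ε' * Jk r (2*r-k)) := by rw [mul_smul_comm]
    calc ppCh r ε ε' * Jk r k
        = ((ε*ε')*(ε*ε')) • (ppCh r ε ε' * Jk r k) := by rw [hee, one_smul]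
      _ = (ε*ε') • ((ε*ε') • (ppCh r ε ε' * Jk r k)) := by rw [← smul_smul]
      _ = (ε*ε') • ((-1:ℂ)^r • (ppCh r ε ε' * Jk r (2*r-k))) := by rw [hA]
      _ = ((ε*ε') * (-1:ℂ)^r) • (ppCh r ε ε' * Jk r (2*r-k)) := by rw [smul_smul]
  rw [Ik_eq_Jk r k, Ik_eq_Jk r (2*r - k), mul_smul_comm, mul_smul_comm, smul_smul, smul_smul,
    key, smul_smul]
  congr 1
  ring

end
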